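/- Let k be a field and n ≥ 2. In the quotient ring k[SL_n] = k[z_{uv} : 1 ≤ u,v ≤ n]/⟨det(z)−1⟩, the images of the products of minors m_{I_1}·m_{I_2}···m_{I_a}, taken over all chains I_1 ≤ I_2 ≤ … ≤ I_a of nonempty proper subsets of {1,…,n} (including the empty product 1), are linearly independent over k. -/

import Mathlib

open Finset
open scoped Classical

namespace Paper

/-- The value (as a natural number) of the `p`-th smallest element (0-based) of `I`;
junk value `0` out of range. -/
def elemV {n : ℕ} (I : Finset (Fin n)) (p : ℕ) : ℕ :=
  ((I.sort (· ≤ ·)).map Fin.val).getD p 0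

/-- The `p`-th smallest element (0-based) of `I`; junk value out of range. -/
def elemF {n : ℕ} (hn : 0 < n) (I : Finset (Fin n)) (p : ℕ) : Fin n :=
  (I.sort (· ≤ ·)).getD p ⟨0, hn⟩

/-- The minor of `z` on the rows of `I` (in increasing order) and the first `I.card` columns. -/
noncomputable def fminor {R : Type*} [CommRing R] {n : ℕ} (z : Matrix (Fin n) (Fin n) R)
    (I : Finset (Fin n)) : R :=
  if h : I.card ≤ n then
    Matrix.det (Matrix.of fun a b : Fin I.card => z (I.orderEmbOfFin rfl a) (Fin.castLE h b))
  else 0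

/-- The minor of `z` whose rows are the elements of the multiset `L` (sorted increasingly,
with multiplicity) and whose columns are the first `L.card` columns.  If `L` has a repeated
element the corresponding determinant has two equal rows, hence it is `0`. -/
noncomputable def mminor {R : Type*} [CommRing R] {N : ℕ} (z : Matrix (Fin N) (Fin N) R)
    (L : Multiset (Fin N)) : R :=
  if h : (L.sort (· ≤ ·)).length ≤ N then
    Matrix.det (Matrix.of fun a b : Fin (L.sort (· ≤ ·)).length =>
      z ((L.sort (· ≤ ·)).get a) (Fin.castLE h b))
  else 0

/-- `I ≤ J` iff `|I| ≥ |J|` and `i_s ≤ j_s` for all `s ≤ |J|` (0-based positions). -/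
def finsetLE {n : ℕ} (I J : Finset (Fin n)) : Prop :=
  J.card ≤ I.card ∧ ∀ p < J.card, elemV I p ≤ elemV J p

/-- `J ≺ I` iff `|J| < |I|`, or `|J| = |I|` and the largest element of the symmetric
difference `I Δ J` belongs to `I`. -/
def prec {n : ℕ} (J I : Finset (Fin n)) : Prop :=
  J.card < I.card ∨ (J.card = I.card ∧
    ∃ x ∈ (I \ J) ∪ (J \ I), x ∈ I ∧ ∀ y ∈ (I \ J) ∪ (J \ I), y ≤ x)

/-- `L` is a strictly decreasing list of (0-based) positions `< |J|` at which the
coordinatewise comparison of `I` and `J` alternates strictly, starting with `i > j`. -/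
def altChain {n : ℕ} (I J : Finset (Fin n)) (L : List ℕ) : Prop :=
  L.Chain' (· > ·) ∧ (∀ p ∈ L, p < J.card) ∧
    ∀ t < L.length, if Even t then elemV J (L.getD t 0) < elemV I (L.getD t 0)
      else elemV I (L.getD t 0) < elemV J (L.getD t 0)

/-- `k(I,J)`: `0` for comparable pairs; otherwise the number of switch positions in the
coordinatewise comparison of `I` and `J` (the greedy top-down alternating count, equivalently
the longest strictly alternating subsequence starting with `i > j`). -/
noncomputable def kNum {n : ℕ} (I J : Finset (Fin n)) : ℕ :=
  if finsetLE I J ∨ finsetLE J I then 0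
  else
    letI := Classical.decPred fun m => ∃ L : List ℕ, L.length = m ∧ altChain I J L
    Nat.findGreatest (fun m => ∃ L : List ℕ, L.length = m ∧ altChain I J L) J.card

/-- The symmetrised `k(I,J) = k(J,I)`, computed in the orientation where the `≺`-larger
set plays the role of `I`. -/
noncomputable def kOf {n : ℕ} (I J : Finset (Fin n)) : ℕ :=
  if prec J I then kNum I J else kNum J I

/-- The sign of the permutation rearranging the increasing enumeration of `A` into the
concatenation (elements of `B` increasing, then elements of `A \ B` increasing). -/
def signAsc {n : ℕ} (A B : Finset (Fin n)) : ℤ :=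
  (-1) ^ (∑ b ∈ B, ((A \ B).filter (· < b)).card)

/-- The sign of the permutation rearranging the decreasing enumeration of `S` into the
concatenation (elements of `A` decreasing, then elements of `S \ A` decreasing). -/
def signDesc {n : ℕ} (S A : Finset (Fin n)) : ℤ :=
  (-1) ^ (∑ a ∈ A, ((S \ A).filter (a < ·)).card)

/-- The row (index) `l` of `{1,…,n}` inside `{1,1̄,…,n,n̄}` (0-based: `l ↦ 2l`). -/
def emb0 {n : ℕ} (l : Fin n) : Fin (2 * n) := ⟨2 * l.1, by have := l.2; omega⟩

/-- The row (index) `l̄` inside `{1,1̄,…,n,n̄}` (0-based: `l̄ ↦ 2l+1`). -/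
def emb1 {n : ℕ} (l : Fin n) : Fin (2 * n) := ⟨2 * l.1 + 1, by have := l.2; omega⟩

/-- `ε_{uv}`: `1` if `v = ū`, `-1` if `u = v̄`, `0` otherwise. -/
def eps {R : Type*} [CommRing R] {n : ℕ} (u v : Fin (2 * n)) : R :=
  if u.1 % 2 = 0 ∧ v.1 = u.1 + 1 then 1
  else if v.1 % 2 = 0 ∧ u.1 = v.1 + 1 then -1 else 0

/-- `J` is forbidden if `j_b = ā` for some `1 ≤ a < b ≤ |J|` (1-based positions; `ā` has
0-based value `2a-1` in the ordering `1 < 1̄ < 2 < 2̄ < …`). -/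
def Forbidden {N : ℕ} (J : Finset (Fin N)) : Prop :=
  ∃ a b : ℕ, 1 ≤ a ∧ a < b ∧ b ≤ J.card ∧ elemV J (b - 1) = 2 * a - 1

end Paper

namespace Paper

/-- The generic `n × n` matrix, with entries the variables of a polynomial ring. -/
noncomputable def genMat (k : Type*) [CommSemiring k] (n : ℕ) :
    Matrix (Fin n) (Fin n) (MvPolynomial (Fin n × Fin n) k) :=
  Matrix.of fun u v => MvPolynomial.X (u, v)

section Aux

open MvPolynomial AddMonoidAlgebra

variable {k : Type*} [Field k] {n : ℕ}

/-- The monomial degree map into the lexicographic order. -/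
noncomputable def DD (n : ℕ) : ((Fin n × Fin n) →₀ ℕ) → Lex ((Lex (Fin n × Fin n)) →₀ ℕ) :=
  fun f => toLex (Finsupp.mapDomain (fun p : Fin n × Fin n => toLex p) f)

lemma DD_inj : Function.Injective (DD n) := fun a b h =>
  Finsupp.mapDomain_injective (toLex.injective (α := Fin n × Fin n)) (toLex.injective h)

lemma DD_add (a b : (Fin n × Fin n) →₀ ℕ) : DD n (a + b) = DD n a + DD n b := by
  simp only [DD, Finsupp.mapDomain_add]
  rfl

lemma DD_apply (f : (Fin n × Fin n) →₀ ℕ) (j : Lex (Fin n × Fin n)) :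
    ofLex (DD n f) j = f (ofLex j) := by
  exact Finsupp.mapDomain_apply (toLex.injective (α := Fin n × Fin n)) f (ofLex j)

/-- The diagonal monomial attached to a choice of rows `r` and columns `c`. -/
noncomputable def dmon {m : ℕ} (r c : Fin m → Fin n) : (Fin n × Fin n) →₀ ℕ :=
  ∑ b : Fin m, Finsupp.single (r b, c b) 1

lemma dmon_apply {m : ℕ} (r c : Fin m → Fin n) (p : Fin n × Fin n) :
    dmon r c p = ∑ b : Fin m, (if (r b, c b) = p then 1 else 0) := by
  rw [dmon, Finsupp.finset_sum_apply]
  exact Finset.sum_congr rfl fun b _ => Finsupp.single_apply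

lemma dmon_apply_ceq {m : ℕ} {r c : Fin m → Fin n} (hc : Function.Injective c)
    (b0 : Fin m) (u : Fin n) :
    dmon r c (u, c b0) = if r b0 = u then 1 else 0 := by
  rw [dmon_apply, Finset.sum_eq_single b0]
  · simp [Prod.ext_iff, eq_comm]
  · intro b _ hb
    rw [if_neg]
    intro hco
    exact hb (hc (congrArg Prod.snd hco))
  · simp

lemma dmon_apply_cne {m : ℕ} {r c : Fin m → Fin n} {u v : Fin n} (h : ∀ b, c b ≠ v) :
    dmon r c (u, v) = 0 := by
  rw [dmon_apply]
  refine Finset.sum_eq_zero fun b _ => if_neg ?_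
  intro hco
  exact h b (congrArg Prod.snd hco)

lemma dmon_perm_lt {m : ℕ} {r c : Fin m → Fin n} (hr : StrictMono r) (hc : StrictMono c)
    {σ : Equiv.Perm (Fin m)} (hσ : σ ≠ 1) :
    DD n (dmon (fun b => r (σ b)) c) < DD n (dmon r c) := by
  have hS : (Finset.univ.filter fun b => σ b ≠ b).Nonempty := by
    by_contra h
    rw [Finset.not_nonempty_iff_eq_empty, Finset.filter_eq_empty_iff] at h
    exact hσ (Equiv.ext fun b => by simpa using h (Finset.mem_univ b))
  set s : Fin m := (Finset.univ.filter fun b => σ b ≠ b).min' hS with hsdef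
  have hs : σ s ≠ s :=
    (Finset.mem_filter.mp ((Finset.univ.filter fun b => σ b ≠ b).min'_mem hS)).2
  have hmin : ∀ b, b < s → σ b = b := by
    intro b hb
    by_contra h
    exact absurd (Finset.min'_le _ b (Finset.mem_filter.mpr ⟨Finset.mem_univ _, h⟩))
      (not_le.mpr hb)
  have hge : ∀ b, s ≤ b → s ≤ σ b := by
    intro b hb
    by_contra h
    push_neg at h
    have h2 : σ b = b := σ.injective (hmin (σ b) h)
    rw [h2] at h
    exact absurd hb (not_le.mpr h)
  refine Finsupp.Lex.lt_iff.mpr ⟨toLex ((r s, c s) : Fin n × Fin n), ?_, ?_⟩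
  · intro j hj
    rw [DD_apply, DD_apply]
    have hj' : (ofLex j).1 < r s ∨ ((ofLex j).1 = r s ∧ (ofLex j).2 < c s) :=
      Prod.Lex.lt_iff.mp hj
    rw [← Prod.mk.eta (p := ofLex j), dmon_apply, dmon_apply]
    refine Finset.sum_congr rfl fun b _ => if_congr ?_ rfl rfl
    by_cases hbs : b < s
    · rw [hmin b hbs]
    · push_neg at hbs
      have hrb : r s ≤ r b := hr.monotone hbs
      have hrσb : r s ≤ r (σ b) := hr.monotone (hge b hbs)
      rcases hj' with hu | ⟨hu, hv⟩
      · refine iff_of_false ?_ ?_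
        · intro hco
          have h1 : r (σ b) = (ofLex j).1 := congrArg Prod.fst hco
          exact absurd h1.symm (ne_of_lt (lt_of_lt_of_le hu hrσb))
        · intro hco
          have h1 : r b = (ofLex j).1 := congrArg Prod.fst hco
          exact absurd h1.symm (ne_of_lt (lt_of_lt_of_le hu hrb))
      · have key : c b = (ofLex j).2 → False := by
          intro hcb
          have hlt : b < s := hc.lt_iff_lt.mp (by rw [hcb]; exact hv)
          exact absurd hlt (not_lt.mpr hbs)
        exact iff_of_false (fun hco => key (congrArg Prod.snd hco))
          (fun hco => key (congrArg Prod.snd hco))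
  · rw [DD_apply, DD_apply]
    have h0 : dmon (fun b => r (σ b)) c (ofLex (toLex ((r s, c s) : Fin n × Fin n))) = 0 := by
      rw [ofLex_toLex, dmon_apply]
      refine Finset.sum_eq_zero fun b _ => if_neg ?_
      intro hco
      have hcb : c b = c s := congrArg Prod.snd hco
      have hbs : b = s := hc.injective hcb
      subst hbs
      exact hs (hr.injective (congrArg Prod.fst hco))
    have h1 : dmon r c (ofLex (toLex ((r s, c s) : Fin n × Fin n))) = 1 := by
      rw [ofLex_toLex]
      rw [dmon_apply_ceq hc.injective s]
      simp
    rw [h0, h1]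
    exact Nat.zero_lt_one

end Aux
section Aux2

open MvPolynomial AddMonoidAlgebra

variable {k : Type*} [Field k] {n : ℕ}

lemma prod_monomial {ι : Type*} (s : Finset ι) (g : ι → ((Fin n × Fin n) →₀ ℕ)) :
    (∏ b ∈ s, (monomial (g b) (1 : k))) = monomial (∑ b ∈ s, g b) 1 := by
  classical
  induction s using Finset.induction_on with
  | empty => simp
  | insert _ _ h ih =>
    rw [Finset.prod_insert h, Finset.sum_insert h, ih, monomial_mul, one_mul]

lemma sign_cast_ne_zero (m : ℕ) (σ : Equiv.Perm (Fin m)) :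
    ((Equiv.Perm.sign σ : ℤ) : k) ≠ 0 := by
  rcases Int.units_eq_one_or (Equiv.Perm.sign σ) with h | h <;> simp [h]

lemma detX_eq {m : ℕ} (r c : Fin m → Fin n) :
    (Matrix.of fun a b : Fin m => (X (r a, c b) : MvPolynomial (Fin n × Fin n) k)).det
      = ∑ σ : Equiv.Perm (Fin m),
          monomial (dmon (fun b => r (σ b)) c) (((Equiv.Perm.sign σ : ℤ) : k)) := by
  rw [Matrix.det_apply']
  refine Finset.sum_congr rfl fun σ _ => ?_
  have h1 : ∀ i : Fin m, (Matrix.of fun a b : Fin m =>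
      (X (r a, c b) : MvPolynomial (Fin n × Fin n) k)) (σ i) i
      = monomial (Finsupp.single (r (σ i), c i) 1) 1 := fun i => rfl
  simp_rw [h1]
  rw [prod_monomial]
  have h2 : ((Equiv.Perm.sign σ : ℤ) : MvPolynomial (Fin n × Fin n) k)
      = C ((Equiv.Perm.sign σ : ℤ) : k) := by
    rw [map_intCast (C : k →+* MvPolynomial (Fin n × Fin n) k)]
  rw [h2, C_mul_monomial, mul_one, dmon]

lemma detX_key {m : ℕ} {r c : Fin m → Fin n} (hr : StrictMono r) (hc : StrictMono c) :
    supDegree (DD n) ((Matrix.of fun a b : Fin m =>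
        (X (r a, c b) : MvPolynomial (Fin n × Fin n) k)).det) = DD n (dmon r c) ∧
    leadingCoeff (DD n) ((Matrix.of fun a b : Fin m =>
        (X (r a, c b) : MvPolynomial (Fin n × Fin n) k)).det) = 1 := by
  set f : Equiv.Perm (Fin m) → MvPolynomial (Fin n × Fin n) k := fun σ =>
    monomial (dmon (fun b => r (σ b)) c) (((Equiv.Perm.sign σ : ℤ) : k)) with hf
  have hsup : ∀ σ, supDegree (DD n) (f σ) = DD n (dmon (fun b => r (σ b)) c) := by
    intro σ
    exact supDegree_single_ne_zero _ (sign_cast_ne_zero m σ)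
  have hone : dmon (fun b => r ((1 : Equiv.Perm (Fin m)) b)) c = dmon r c := by
    simp [Equiv.Perm.one_apply]
  have hmax : ∀ σ ∈ Finset.univ, σ ≠ (1 : Equiv.Perm (Fin m)) →
      supDegree (DD n) (f σ) < supDegree (DD n) (f 1) := by
    intro σ _ hσ
    rw [hsup, hsup, hone]
    exact dmon_perm_lt hr hc hσ
  obtain ⟨hd, hl⟩ := supDegree_leadingCoeff_sum_eq (D := DD n) (Finset.mem_univ 1) hmax
  rw [detX_eq]
  constructor
  · rw [hd, hsup, hone]
  · rw [hl]
    exact (leadingCoeff_single DD_inj _ _).trans (by simp)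

lemma card_le (I : Finset (Fin n)) : I.card ≤ n :=
  (I.card_le_univ).trans (le_of_eq (Fintype.card_fin n))

lemma castLE_strictMono {m : ℕ} (h : m ≤ n) : StrictMono (Fin.castLE h) := by
  intro a b hab
  exact hab

lemma fminor_eq (I : Finset (Fin n)) :
    fminor (genMat k n) I = (Matrix.of fun a b : Fin I.card =>
      (X ((I.orderEmbOfFin rfl a : Fin n), Fin.castLE (card_le I) b)
        : MvPolynomial (Fin n × Fin n) k)).det := by
  rw [fminor, dif_pos (card_le I)]
  rfl

/-- The diagonal monomial of the minor on `I`. -/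
noncomputable def diagM (I : Finset (Fin n)) : (Fin n × Fin n) →₀ ℕ :=
  dmon (fun b => I.orderEmbOfFin rfl b) (Fin.castLE (card_le I))

lemma fminor_key (I : Finset (Fin n)) :
    supDegree (DD n) (fminor (genMat k n) I) = DD n (diagM I) ∧
    leadingCoeff (DD n) (fminor (genMat k n) I) = 1 := by
  rw [fminor_eq, diagM]
  exact detX_key (fun a b hab => (I.orderEmbOfFin rfl).strictMono hab)
    (castLE_strictMono (card_le I))

/-- The monomial attached to a list of finsets. -/
noncomputable def muL (L : List (Finset (Fin n))) : (Fin n × Fin n) →₀ ℕ :=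
  (L.map diagM).sum

@[simp] lemma muL_nil : muL ([] : List (Finset (Fin n))) = 0 := rfl

lemma muL_cons (I : Finset (Fin n)) (T : List (Finset (Fin n))) :
    muL (I :: T) = diagM I + muL T := by
  simp [muL]

lemma prodP_key (L : List (Finset (Fin n))) :
    Monic (DD n) ((L.map fun I => fminor (genMat k n) I).prod) ∧
    supDegree (DD n) ((L.map fun I => fminor (genMat k n) I).prod) = DD n (muL L) := by
  induction L with
  | nil =>
    constructor
    · exact monic_one DD_inj
    · rw [List.map_nil, List.prod_nil, muL_nil, AddMonoidAlgebra.one_def,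
        supDegree_single_ne_zero _ (one_ne_zero)]
  | cons I T ih =>
    rw [List.map_cons, List.prod_cons]
    have hm : Monic (DD n) (fminor (genMat k n) I) := by
      rw [Monic, (fminor_key I).2]
    constructor
    · exact hm.mul DD_inj DD_add ih.1
    · rw [ih.1.supDegree_mul_of_ne_zero_left DD_inj DD_add hm.ne_zero,
        (fminor_key I).1, ih.2, muL_cons, DD_add]

end Aux2
section Aux3

open MvPolynomial AddMonoidAlgebra

variable {n : ℕ}

lemma finsetLE_trans : Transitive (finsetLE (n := n)) := by
  rintro I J K ⟨h1, h2⟩ ⟨h3, h4⟩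
  exact ⟨h3.trans h1, fun p hp => (h2 p (lt_of_lt_of_le hp h3)).trans (h4 p hp)⟩

instance : IsTrans (Finset (Fin n)) finsetLE := ⟨fun _ _ _ h1 h2 => finsetLE_trans h1 h2⟩

lemma elemV_eq_emb (I : Finset (Fin n)) {p : ℕ} (hp : p < I.card) :
    elemV I p = (I.orderEmbOfFin rfl ⟨p, hp⟩ : Fin n).val := by
  have hlen : p < ((I.sort (· ≤ ·)).map Fin.val).length := by
    rw [List.length_map, Finset.length_sort]; exact hp
  rw [elemV, List.getD_eq_getElem _ _ hlen, List.getElem_map, Finset.orderEmbOfFin_apply]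
  rfl

lemma diagM_apply_lt (I : Finset (Fin n)) {v : Fin n} (hv : v.val < I.card) (u : Fin n) :
    diagM I (u, v) = if I.orderEmbOfFin rfl ⟨v.val, hv⟩ = u then 1 else 0 := by
  have hcv : Fin.castLE (card_le I) (⟨v.val, hv⟩ : Fin I.card) = v := by
    apply Fin.ext; rfl
  have := dmon_apply_ceq (r := fun b => I.orderEmbOfFin rfl b)
    (c := Fin.castLE (card_le I)) (castLE_strictMono (card_le I)).injective ⟨v.val, hv⟩ u
  rw [hcv] at this
  exact this

lemma diagM_apply_ge (I : Finset (Fin n)) {v : Fin n} (hv : ¬ v.val < I.card) (u : Fin n) :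
    diagM I (u, v) = 0 := by
  refine dmon_apply_cne fun b hb => ?_
  apply hv
  rw [← hb]
  exact b.2

lemma diagM_ne_iff (I : Finset (Fin n)) (u v : Fin n) :
    diagM I (u, v) ≠ 0 ↔ ∃ h : v.val < I.card, I.orderEmbOfFin rfl ⟨v.val, h⟩ = u := by
  by_cases hv : v.val < I.card
  · rw [diagM_apply_lt I hv u]
    constructor
    · intro h
      by_cases he : I.orderEmbOfFin rfl ⟨v.val, hv⟩ = u
      · exact ⟨hv, he⟩
      · rw [if_neg he] at h; exact absurd rfl h
    · rintro ⟨h, he⟩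
      rw [if_pos he]
      exact one_ne_zero
  · simp [diagM_apply_ge I hv u, hv]

lemma muL_ne_iff (L : List (Finset (Fin n))) (p : Fin n × Fin n) :
    muL L p ≠ 0 ↔ ∃ I ∈ L, diagM I p ≠ 0 := by
  induction L with
  | nil => simp
  | cons I T ih =>
    rw [muL_cons, Finsupp.add_apply]
    constructor
    · intro h
      by_cases h1 : diagM I p = 0
      · rw [h1, zero_add] at h
        obtain ⟨J, hJ, hJ2⟩ := ih.mp h
        exact ⟨J, List.mem_cons_of_mem _ hJ, hJ2⟩
      · exact ⟨I, List.mem_cons_self, h1⟩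
    · rintro ⟨J, hJ, hJ2⟩
      rcases List.mem_cons.mp hJ with rfl | hJ'
      · omega
      · have := ih.mpr ⟨J, hJ', hJ2⟩
        omega

lemma head_pair (I : Finset (Fin n)) (T : List (Finset (Fin n)))
    (hch : List.Chain' finsetLE (I :: T)) : ∀ J ∈ T, finsetLE I J := by
  have hp := (List.isChain_iff_pairwise (R := finsetLE)).mp hch
  exact (List.pairwise_cons.mp hp).1

lemma head_card (I : Finset (Fin n)) (T : List (Finset (Fin n)))
    (hch : List.Chain' finsetLE (I :: T)) (v : Fin n) :
    (∃ u, muL (I :: T) (u, v) ≠ 0) ↔ v.val < I.card := by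
  constructor
  · rintro ⟨u, hu⟩
    obtain ⟨J, hJ, hJ2⟩ := (muL_ne_iff _ _).mp hu
    obtain ⟨hvJ, -⟩ := (diagM_ne_iff J u v).mp hJ2
    rcases List.mem_cons.mp hJ with rfl | hJ'
    · exact hvJ
    · exact lt_of_lt_of_le hvJ (head_pair I T hch J hJ').1
  · intro hv
    refine ⟨I.orderEmbOfFin rfl ⟨v.val, hv⟩, (muL_ne_iff _ _).mpr
      ⟨I, List.mem_cons_self, (diagM_ne_iff I _ v).mpr ⟨hv, rfl⟩⟩⟩

lemma head_le (I : Finset (Fin n)) (T : List (Finset (Fin n)))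
    (hch : List.Chain' finsetLE (I :: T)) {v : Fin n} (hv : v.val < I.card) {u : Fin n}
    (h : muL (I :: T) (u, v) ≠ 0) : I.orderEmbOfFin rfl ⟨v.val, hv⟩ ≤ u := by
  obtain ⟨J, hJ, hJ2⟩ := (muL_ne_iff _ _).mp h
  obtain ⟨hvJ, he⟩ := (diagM_ne_iff J u v).mp hJ2
  rcases List.mem_cons.mp hJ with rfl | hJ'
  · rw [he]
  · have hLE := head_pair I T hch J hJ'
    have h2 := hLE.2 v.val hvJ
    rw [elemV_eq_emb I hv, elemV_eq_emb J hvJ] at h2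
    rw [← he, Fin.le_def]
    exact h2

lemma finset_eq_of_emb (I I' : Finset (Fin n)) (hc : I.card = I'.card)
    (h : ∀ p (h1 : p < I.card) (h2 : p < I'.card),
      I.orderEmbOfFin rfl ⟨p, h1⟩ = I'.orderEmbOfFin rfl ⟨p, h2⟩) : I = I' := by
  have hs : I.sort (· ≤ ·) = I'.sort (· ≤ ·) := by
    apply List.ext_getElem (by rw [Finset.length_sort, Finset.length_sort, hc])
    intro p h1 h2
    have h1' : p < I.card := by rwa [Finset.length_sort] at h1
    have h2' : p < I'.card := by rwa [Finset.length_sort] at h2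
    have e1 : ((I.sort (· ≤ ·))[p]'h1) = I.orderEmbOfFin rfl ⟨p, h1'⟩ :=
      (Finset.orderEmbOfFin_apply I rfl ⟨p, h1'⟩).symm
    have e2 : ((I'.sort (· ≤ ·))[p]'h2) = I'.orderEmbOfFin rfl ⟨p, h2'⟩ :=
      (Finset.orderEmbOfFin_apply I' rfl ⟨p, h2'⟩).symm
    rw [e1, e2]
    exact h p h1' h2'
  have := congrArg List.toFinset hs
  rwa [Finset.sort_toFinset, Finset.sort_toFinset] at this

lemma muL_ne_nil (I : Finset (Fin n)) (T : List (Finset (Fin n))) (hne : I.Nonempty) :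
    muL (I :: T) ≠ 0 := by
  intro h0
  have hv : (0 : ℕ) < I.card := Finset.card_pos.mpr hne
  have hn0 : 0 < n := lt_of_lt_of_le hv (card_le I)
  have h1 : muL (I :: T) (I.orderEmbOfFin rfl ⟨0, hv⟩, ⟨0, hn0⟩) ≠ 0 :=
    (muL_ne_iff _ _).mpr ⟨I, List.mem_cons_self, (diagM_ne_iff I _ _).mpr ⟨hv, rfl⟩⟩
  rw [h0] at h1
  exact h1 rfl

lemma muL_injective : ∀ (L L' : List (Finset (Fin n))), List.Chain' finsetLE L →
    List.Chain' finsetLE L' → (∀ I ∈ L, I.Nonempty) → (∀ I ∈ L', I.Nonempty) →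
    muL L = muL L' → L = L' := by
  intro L
  induction L with
  | nil =>
    intro L' _ _ _ hne' h
    cases L' with
    | nil => rfl
    | cons I' T' =>
      exact absurd h.symm (muL_ne_nil I' T' (hne' _ (List.mem_cons_self)))
  | cons I T ih =>
    intro L' hch hch' hne hne' h
    cases L' with
    | nil => exact absurd h (muL_ne_nil I T (hne _ (List.mem_cons_self)))
    | cons I' T' =>
      have hcard : I.card = I'.card := by
        by_contra hnec
        rcases Nat.lt_or_ge I.card I'.card with hlt | hge
        · set v : Fin n := ⟨I.card, lt_of_lt_of_le hlt (card_le I')⟩ with hvdef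
          obtain ⟨u, hu⟩ := (head_card I' T' hch' v).mpr hlt
          rw [← h] at hu
          have := (head_card I T hch v).mp ⟨u, hu⟩
          exact absurd this (lt_irrefl _)
        · have hlt : I'.card < I.card := lt_of_le_of_ne hge (fun he => hnec he.symm)
          set v : Fin n := ⟨I'.card, lt_of_lt_of_le hlt (card_le I)⟩ with hvdef
          obtain ⟨u, hu⟩ := (head_card I T hch v).mpr hlt
          rw [h] at hu
          have := (head_card I' T' hch' v).mp ⟨u, hu⟩
          exact absurd this (lt_irrefl _)
      have hhead : I = I' := by
        apply finset_eq_of_emb I I' hcard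
        intro p h1 h2
        have hpn : p < n := lt_of_lt_of_le h1 (card_le I)
        set v : Fin n := ⟨p, hpn⟩ with hvdef
        have hL : muL (I :: T) (I.orderEmbOfFin rfl ⟨p, h1⟩, v) ≠ 0 :=
          (muL_ne_iff _ _).mpr ⟨I, List.mem_cons_self,
            (diagM_ne_iff I _ v).mpr ⟨h1, rfl⟩⟩
        have hL' : muL (I' :: T') (I'.orderEmbOfFin rfl ⟨p, h2⟩, v) ≠ 0 :=
          (muL_ne_iff _ _).mpr ⟨I', List.mem_cons_self,
            (diagM_ne_iff I' _ v).mpr ⟨h2, rfl⟩⟩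
        have hle1 : I'.orderEmbOfFin rfl ⟨p, h2⟩ ≤ I.orderEmbOfFin rfl ⟨p, h1⟩ := by
          have := hL
          rw [h] at this
          exact head_le I' T' hch' (v := v) h2 this
        have hle2 : I.orderEmbOfFin rfl ⟨p, h1⟩ ≤ I'.orderEmbOfFin rfl ⟨p, h2⟩ := by
          have := hL'
          rw [← h] at this
          exact head_le I T hch (v := v) h1 this
        exact le_antisymm hle2 hle1
      subst hhead
      have htail : muL T = muL T' := by
        rw [muL_cons, muL_cons] at h
        exact add_left_cancel h
      have := ih T' hch.tail hch'.tail
        (fun J hJ => hne J (List.mem_cons_of_mem _ hJ))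
        (fun J hJ => hne' J (List.mem_cons_of_mem _ hJ)) htail
      rw [this]

end Aux3
section Aux4

open MvPolynomial AddMonoidAlgebra

variable (k : Type*) [Field k] (n : ℕ)

/-- The specialization recording the degree in the variables of the last column. -/
noncomputable def phiC : MvPolynomial (Fin n × Fin n) k →ₐ[k]
    Polynomial (MvPolynomial (Fin n × Fin n) k) :=
  aeval fun p : Fin n × Fin n =>
    if (p.2 : ℕ) = n - 1 then Polynomial.X * Polynomial.C (X p) else Polynomial.C (X p)

variable {k n}

lemma det_genMat_ne_zero (hn : 0 < n) : (genMat k n).det ≠ 0 := by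
  have hkey := detX_key (k := k) (n := n) (m := n)
    (r := fun a => a) (c := fun a => a) strictMono_id strictMono_id
  have hgen : (genMat k n).det
      = (Matrix.of fun a b : Fin n => (X (a, b) : MvPolynomial (Fin n × Fin n) k)).det := rfl
  rw [hgen]
  intro h0
  rw [h0, leadingCoeff_zero] at hkey
  exact zero_ne_one hkey.2

lemma phiC_det (hn : 2 ≤ n) :
    phiC k n ((genMat k n).det)
      = Polynomial.C ((genMat k n).det) * Polynomial.X := by
  have h1 : phiC k n ((genMat k n).det) = ((genMat k n).map (phiC k n)).det :=
    RingHom.map_det (phiC k n).toRingHom _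
  have h2 : (genMat k n).map (phiC k n)
      = ((genMat k n).map (Polynomial.C : MvPolynomial (Fin n × Fin n) k →+* _))
        * Matrix.diagonal (fun v : Fin n =>
            if (v : ℕ) = n - 1 then (Polynomial.X : Polynomial (MvPolynomial (Fin n × Fin n) k))
            else 1) := by
    refine Matrix.ext fun u v => ?_
    rw [Matrix.mul_diagonal]
    show phiC k n (X (u, v)) = _
    rw [phiC, aeval_X]
    simp only [Matrix.map_apply, genMat, Matrix.of_apply, RingHom.coe_coe]
    split_ifs with hcond
    · rw [mul_comm]
    · rw [mul_one]
  have h3 : (∏ v : Fin n, (if (v : ℕ) = n - 1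
      then (Polynomial.X : Polynomial (MvPolynomial (Fin n × Fin n) k)) else 1)) = Polynomial.X := by
    rw [Finset.prod_eq_single_of_mem (⟨n - 1, by omega⟩ : Fin n) (Finset.mem_univ _)]
    · rw [if_pos rfl]
    · intro v _ hv
      rw [if_neg]
      intro hc
      exact hv (Fin.ext hc)
  have h4 : (((genMat k n).map (Polynomial.C : MvPolynomial (Fin n × Fin n) k →+* _)).det)
      = Polynomial.C ((genMat k n).det) :=
    (RingHom.map_det (Polynomial.C : MvPolynomial (Fin n × Fin n) k →+* _) _).symm
  rw [h1, h2, Matrix.det_mul, Matrix.det_diagonal, h3, h4]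

lemma phiC_fminor (I : Finset (Fin n)) (hI : I.card < n) :
    phiC k n (fminor (genMat k n) I) = Polynomial.C (fminor (genMat k n) I) := by
  rw [fminor_eq]
  set M : Matrix (Fin I.card) (Fin I.card) (MvPolynomial (Fin n × Fin n) k) :=
    Matrix.of fun a b : Fin I.card =>
      (X ((I.orderEmbOfFin rfl a : Fin n), Fin.castLE (card_le I) b)) with hM
  have h1 : phiC k n M.det = (M.map (phiC k n)).det :=
    RingHom.map_det (phiC k n).toRingHom _
  have h2 : M.map (phiC k n)
      = M.map (Polynomial.C : MvPolynomial (Fin n × Fin n) k →+* _) := by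
    refine Matrix.ext fun a b => ?_
    simp only [Matrix.map_apply, hM, Matrix.of_apply, RingHom.coe_coe]
    show phiC k n (X _) = _
    rw [phiC, aeval_X, if_neg]
    have hb : (b : ℕ) < I.card := b.2
    show ¬ ((Fin.castLE (card_le I) b : Fin n) : ℕ) = n - 1
    have he : ((Fin.castLE (card_le I) b : Fin n) : ℕ) = (b : ℕ) := rfl
    omega
  have h3 : (M.map (Polynomial.C : MvPolynomial (Fin n × Fin n) k →+* _)).det
      = Polynomial.C M.det :=
    (RingHom.map_det (Polynomial.C : MvPolynomial (Fin n × Fin n) k →+* _) _).symm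
  rw [h1, h2, h3]

lemma phiC_prod (L : List (Finset (Fin n))) (hL : ∀ I ∈ L, I ≠ Finset.univ) :
    phiC k n ((L.map fun I => fminor (genMat k n) I).prod)
      = Polynomial.C ((L.map fun I => fminor (genMat k n) I).prod) := by
  induction L with
  | nil => simp
  | cons I T ih =>
    have hIlt : I.card < n := by
      have h1 := card_le I
      rcases lt_or_eq_of_le h1 with h | h
      · exact h
      · exact absurd (Finset.eq_univ_of_card I (h.trans (Fintype.card_fin n).symm))
          (hL I (List.mem_cons_self))
    rw [List.map_cons, List.prod_cons, map_mul, map_mul, phiC_fminor I hIlt,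
      ih fun J hJ => hL J (List.mem_cons_of_mem _ hJ)]

lemma eq_zero_of_mem_span (hn : 2 ≤ n) (F : MvPolynomial (Fin n × Fin n) k)
    (hphi : phiC k n F = Polynomial.C F)
    (hmem : F ∈ Ideal.span {(genMat k n).det - 1}) : F = 0 := by
  obtain ⟨q, hq⟩ := Ideal.mem_span_singleton'.mp hmem
  by_contra hF
  have hdet : (genMat k n).det ≠ 0 := det_genMat_ne_zero (by omega)
  have happ : phiC k n q * (Polynomial.C ((genMat k n).det) * Polynomial.X - 1)
      = Polynomial.C F := by
    rw [← hphi, ← hq, map_mul, map_sub, map_one, phiC_det hn]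
  have hCF : (Polynomial.C F : Polynomial (MvPolynomial (Fin n × Fin n) k)) ≠ 0 := by
    simpa using hF
  have hq0 : phiC k n q ≠ 0 := by
    intro h
    rw [h, zero_mul] at happ
    exact hCF happ.symm
  have hfac : (Polynomial.C ((genMat k n).det) * Polynomial.X - 1
      : Polynomial (MvPolynomial (Fin n × Fin n) k)) ≠ 0 := by
    intro h
    rw [h, mul_zero] at happ
    exact hCF happ.symm
  have hnd : (Polynomial.C ((genMat k n).det) * Polynomial.X - 1
      : Polynomial (MvPolynomial (Fin n × Fin n) k)).natDegree = 1 := by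
    rw [show (1 : Polynomial (MvPolynomial (Fin n × Fin n) k)) = Polynomial.C 1 from
      (Polynomial.C_1).symm, Polynomial.natDegree_sub_C,
      Polynomial.natDegree_C_mul_X _ hdet]
  have hmul := Polynomial.natDegree_mul hq0 hfac
  rw [happ, Polynomial.natDegree_C, hnd] at hmul
  omega

end Aux4
open MvPolynomial AddMonoidAlgebra

/-- in `k[SL_n]` the products of minors along chains of nonempty proper
subsets (including the empty product `1`) are linearly independent. -/
theorem chain_products_linearIndependent (k : Type*) [Field k] (n : ℕ) (hn : 2 ≤ n) :
    LinearIndependent k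
      (fun L : {L : List (Finset (Fin n)) // List.Chain' finsetLE L ∧
          ∀ I ∈ L, I.Nonempty ∧ I ≠ Finset.univ} =>
        Ideal.Quotient.mk (Ideal.span {(genMat k n).det - 1})
          ((L.1.map fun I => fminor (genMat k n) I).prod)) := by
  classical
  set Jd : Ideal (MvPolynomial (Fin n × Fin n) k) :=
    Ideal.span {(genMat k n).det - 1} with hJd
  set P : {L : List (Finset (Fin n)) // List.Chain' finsetLE L ∧
      ∀ I ∈ L, I.Nonempty ∧ I ≠ Finset.univ} → MvPolynomial (Fin n × Fin n) k :=
    fun L => (L.1.map fun I => fminor (genMat k n) I).prod with hPdef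
  rw [linearIndependent_iff']
  intro s g hsum i his
  by_contra hgi
  have hsum2 : ∑ j ∈ s, g j • Ideal.Quotient.mk Jd (P j) = 0 := hsum
  set s' := s.filter (fun j => g j ≠ 0) with hs'
  have his' : i ∈ s' := Finset.mem_filter.mpr ⟨his, hgi⟩
  have hg' : ∀ j ∈ s', g j ≠ 0 := fun j hj => (Finset.mem_filter.mp hj).2
  have hCne : ∀ j ∈ s', (C (g j) : MvPolynomial (Fin n × Fin n) k) ≠ 0 := by
    intro j hj
    simpa using hg' j hj
  have hsum' : ∑ j ∈ s', g j • Ideal.Quotient.mk Jd (P j) = 0 := by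
    rw [← hsum2]
    apply Finset.sum_subset (Finset.filter_subset _ _)
    intro j hj hnj
    have hz : g j = 0 := by
      by_contra hgj
      exact hnj (Finset.mem_filter.mpr ⟨hj, hgj⟩)
    rw [hz, zero_smul]
  set F := ∑ j ∈ s', g j • P j with hF
  have hmk : Ideal.Quotient.mk Jd F = 0 := by
    have h2 : ⇑(Ideal.Quotient.mkₐ k Jd) = ⇑(Ideal.Quotient.mk Jd) :=
      Ideal.Quotient.mkₐ_eq_mk k Jd
    have h1 : Ideal.Quotient.mkₐ k Jd F
        = ∑ j ∈ s', g j • (Ideal.Quotient.mkₐ k Jd) (P j) := by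
      rw [hF, map_sum]
      exact Finset.sum_congr rfl fun j _ => map_smul _ _ _
    rw [h2] at h1
    rw [← h2, Ideal.Quotient.mkₐ_eq_mk] at hsum' ⊢
    rw [← hsum']
    exact h1
  have hmem : F ∈ Jd := Ideal.Quotient.eq_zero_iff_mem.mp hmk
  have hphi : phiC k n F = Polynomial.C F := by
    rw [hF, map_sum, map_sum (Polynomial.C : MvPolynomial (Fin n × Fin n) k →+* _) _ s']
    refine Finset.sum_congr rfl fun j hj => ?_
    rw [smul_eq_C_mul, map_mul, map_mul, phiC_prod j.1 (fun I hI => (j.2.2 I hI).2)]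
    congr 1
    rw [← MvPolynomial.algebraMap_eq, AlgHom.commutes, Polynomial.algebraMap_apply,
      MvPolynomial.algebraMap_eq]
  have hF0 : F = 0 := eq_zero_of_mem_span hn F hphi hmem
  have hne : F ≠ 0 := by
    rw [hF]
    apply AddMonoidAlgebra.sum_ne_zero_of_injOn_supDegree (D := DD n)
    · exact ⟨i, his'⟩
    · intro j hj
      rw [smul_eq_C_mul]
      exact mul_ne_zero (hCne j hj) (prodP_key j.1).1.ne_zero
    · have key : ∀ j ∈ s', supDegree (DD n) (g j • P j) = DD n (muL j.1) := by
        intro j hj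
        rw [smul_eq_C_mul,
          (prodP_key j.1).1.supDegree_mul_of_ne_zero_left DD_inj DD_add (hCne j hj),
          (prodP_key j.1).2]
        have hC : supDegree (DD n) (C (g j) : MvPolynomial (Fin n × Fin n) k) = DD n 0 := by
          rw [MvPolynomial.C_apply, ← single_eq_monomial]
          exact supDegree_single_ne_zero _ (hg' j hj)
        rw [hC, ← DD_add, zero_add]
      intro a ha b hb hab
      have h1 := key a (Finset.mem_coe.mp ha)
      have h2 := key b (Finset.mem_coe.mp hb)
      have hmu : muL a.1 = muL b.1 := by
        apply DD_inj
        rw [← h1, ← h2]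
        exact hab
      exact Subtype.ext (muL_injective a.1 b.1 a.2.1 b.2.1
        (fun I hI => (a.2.2 I hI).1) (fun I hI => (b.2.2 I hI).1) hmu)
  exact hne hF0

end Paper
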